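/- For every even integer n ≥ 8, the clique partition of G_n whose parts are {v_1, …, v_{n/2}} and the singletons {u_1}, …, {u_{n/2}} is the unique clique partition of G_n of cost n/2; every other clique partition of G_n has strictly larger cost. -/

import Mathlib

open scoped Classical

namespace CD

variable {V : Type*}

/-- An open wedge, encoded as a pair `(p, k)` where `p = s(i,j)` is the unordered pair of
endpoint vertices and `k` is the center: `{i,k}` and `{j,k}` are edges and `{i,j}` is not.
Using an unordered pair identifies the wedges `(i,j,k)` and `(j,i,k)`. -/
def IsOpenWedge (G : SimpleGraph V) (w : Sym2 V × V) : Prop :=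
  ∃ i j : V, w.1 = s(i, j) ∧ i ≠ j ∧ G.Adj i w.2 ∧ G.Adj j w.2 ∧ ¬ G.Adj i j

/-- The two edges of a wedge `(s(i,j), k)`, namely `s(i,k)` and `s(j,k)`. -/
def wedgeEdges (w : Sym2 V × V) : Set (Sym2 V) :=
  {e | ∃ x ∈ w.1, e = s(x, w.2)}

/-- The set of open wedges of `G`. -/
def wedgeSet (G : SimpleGraph V) : Set (Sym2 V × V) := {w | IsOpenWedge G w}

/-- `E_W ⊆ E` is an STC labeling if every open wedge has one of its two edges in `E_W`. -/
def IsSTCLabeling (G : SimpleGraph V) (EW : Set (Sym2 V)) : Prop :=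
  EW ⊆ G.edgeSet ∧
  ∀ i j k : V, i ≠ j → G.Adj i k → G.Adj j k → ¬ G.Adj i j →
    s(i, k) ∈ EW ∨ s(j, k) ∈ EW

/-- Minimum size of an STC labeling of `G`. -/
noncomputable def MinSTC (G : SimpleGraph V) : ℕ :=
  sInf {c | ∃ EW : Set (Sym2 V), IsSTCLabeling G EW ∧ EW.ncard = c}

variable [Fintype V] [DecidableEq V]

/-- A clique partition: a partition of the vertex set all of whose parts are cliques in `G`. -/
def IsCliquePartition (G : SimpleGraph V) (C : Finpartition (Finset.univ : Finset V)) : Prop :=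
  ∀ P ∈ C.parts, G.IsClique (P : Set V)

/-- An edge crosses the partition iff no part contains both of its endpoints
(equivalently, its endpoints lie in different parts). -/
def Crosses (C : Finpartition (Finset.univ : Finset V)) (e : Sym2 V) : Prop :=
  ¬ ∃ P ∈ C.parts, ∀ x ∈ e, x ∈ P

/-- The cost of a partition: the number of edges of `G` crossing it. -/
noncomputable def cost (G : SimpleGraph V) (C : Finpartition (Finset.univ : Finset V)) : ℕ :=
  {e | e ∈ G.edgeSet ∧ Crosses C e}.ncard

/-- Optimal cluster deletion value: the minimum cost of a clique partition of `G`. -/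
noncomputable def OPTCD (G : SimpleGraph V) : ℕ :=
  sInf {c | ∃ C : Finpartition (Finset.univ : Finset V), IsCliquePartition G C ∧ cost G C = c}

/-- `B_k(G)`: edges `{i,j} ∈ E` with `i, j ≠ k`, `{i,k} ∈ E` and `{j,k} ∉ E`. -/
def Bset (G : SimpleGraph V) (k : V) : Set (Sym2 V) :=
  {e | ∃ i j : V, e = s(i, j) ∧ G.Adj i j ∧ j ≠ k ∧ G.Adj i k ∧ ¬ G.Adj j k}

/-- `N_k(G)`: unordered pairs `{i,j}` of distinct vertices with `{i,k}, {j,k} ∈ E`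
and `{i,j} ∉ E`. -/
def Nset (G : SimpleGraph V) (k : V) : Set (Sym2 V) :=
  {e | ∃ i j : V, e = s(i, j) ∧ i ≠ j ∧ ¬ G.Adj i j ∧ G.Adj i k ∧ G.Adj j k}

/-- Feasibility for the STC LP relaxation: variables are nonnegative on edges and for every
open wedge `(i,j,k)` centered at `k` we have `x_{ik} + x_{jk} ≥ 1`. -/
def LPFeasible (G : SimpleGraph V) (x : Sym2 V → ℚ) : Prop :=
  (∀ e ∈ G.edgeSet, 0 ≤ x e) ∧
  ∀ i j k : V, i ≠ j → G.Adj i k → G.Adj j k → ¬ G.Adj i j →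
    1 ≤ x s(i, k) + x s(j, k)

/-- A solution is half-integral if every edge variable lies in `{0, 1/2, 1}`. -/
def HalfIntegral (G : SimpleGraph V) (x : Sym2 V → ℚ) : Prop :=
  ∀ e ∈ G.edgeSet, x e = 0 ∨ x e = 1 / 2 ∨ x e = 1

/-- Feasibility for the program (IP2): binary variables `y_e, z_e` on edges, and for every
open wedge `(i,j,k)` centered at `k`, `z_{ik} ≤ y_{jk}` and `z_{jk} ≤ y_{ik}`. -/
def IP2Feasible (G : SimpleGraph V) (y z : Sym2 V → ℚ) : Prop :=
  (∀ e ∈ G.edgeSet, (y e = 0 ∨ y e = 1) ∧ (z e = 0 ∨ z e = 1)) ∧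
  ∀ i j k : V, i ≠ j → G.Adj i k → G.Adj j k → ¬ G.Adj i j →
    z s(i, k) ≤ y s(j, k) ∧ z s(j, k) ≤ y s(i, k)

/-- Cyclic successor on `Fin m` (i.e. `i + 1` modulo `m`). -/
def fnext {m : ℕ} (i : Fin m) : Fin m := i + ⟨1 % m, Nat.mod_lt 1 i.pos⟩

/-- Cyclic predecessor on `Fin m` (i.e. `i - 1` modulo `m`). -/
def fprev {m : ℕ} (i : Fin m) : Fin m := i - ⟨1 % m, Nat.mod_lt 1 i.pos⟩

/-- The graph `G_n` (with `m = n/2`): vertices `Sum.inl i = vᵢ` and `Sum.inr i = uᵢ`;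
the `vᵢ` form a clique and each `uᵢ` is pendant, adjacent only to `vᵢ`. -/
def Gn (m : ℕ) : SimpleGraph (Fin m ⊕ Fin m) :=
  SimpleGraph.fromRel (fun a b =>
    match a, b with
    | Sum.inl _, Sum.inl _ => True
    | Sum.inl i, Sum.inr j => i = j
    | _, _ => False)

/-- The parts of the canonical clique partition of `G_n`:
the clique `{v₁, …, v_{n/2}}` together with the singletons `{uⱼ}`. -/
def Pstar (m : ℕ) : Finset (Finset (Fin m ⊕ Fin m)) :=
  insert ((Finset.univ : Finset (Fin m)).image Sum.inl)
    ((Finset.univ : Finset (Fin m)).image (fun j => {Sum.inr j}))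

/-- The wedge set `W_n = { (vᵢ, u_{i+1}, v_{i+1}) : i }`, each wedge centered at `v_{i+1}`,
indices taken modulo `m = n/2`. -/
def Wn (m : ℕ) : Set (Sym2 (Fin m ⊕ Fin m) × (Fin m ⊕ Fin m)) :=
  {w | ∃ i : Fin m, w = (s(Sum.inl i, Sum.inr (fnext i)), Sum.inl (fnext i))}

/-- The pendant edges `{uᵢ, vᵢ}` together with the cycle edges `{vᵢ, v_{i+1}}`
(indices modulo `m = n/2`). -/
def EWn (m : ℕ) : Set (Sym2 (Fin m ⊕ Fin m)) :=
  {e | ∃ i : Fin m, e = s(Sum.inr i, Sum.inl i)} ∪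
  {e | ∃ i : Fin m, e = s(Sum.inl i, Sum.inl (fnext i))}

open Sum Finset

variable {m : ℕ}

lemma gn_adj_inl_inl {i j : Fin m} : (Gn m).Adj (inl i) (inl j) ↔ i ≠ j := by simp [Gn]
lemma gn_adj_inl_inr {i j : Fin m} : (Gn m).Adj (inl i) (inr j) ↔ i = j := by simp [Gn]
lemma gn_adj_inr_inl {i j : Fin m} : (Gn m).Adj (inr i) (inl j) ↔ j = i := by simp [Gn]
lemma gn_not_adj_inr_inr {i j : Fin m} : ¬ (Gn m).Adj (inr i) (inr j) := by simp [Gn]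

def Vbig (m : ℕ) : Finset (Fin m ⊕ Fin m) := Finset.univ.image Sum.inl

lemma mem_Vbig {x : Fin m ⊕ Fin m} : x ∈ Vbig m ↔ ∃ i, x = inl i := by
  simp [Vbig, eq_comm]

lemma gn_edge_iff {e : Sym2 (Fin m ⊕ Fin m)} :
    e ∈ (Gn m).edgeSet ↔
      (∃ i j : Fin m, i ≠ j ∧ e = s(inl i, inl j)) ∨ ∃ i, e = s(inl i, inr i) := by
  induction e using Sym2.ind with
  | _ a b =>
    rw [SimpleGraph.mem_edgeSet]
    constructor
    · intro h
      match a, b with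
      | inl i, inl j => exact Or.inl ⟨i, j, gn_adj_inl_inl.1 h, rfl⟩
      | inl i, inr j => exact Or.inr ⟨i, by rw [gn_adj_inl_inr.1 h]⟩
      | inr i, inl j => exact Or.inr ⟨j, by rw [gn_adj_inr_inl.1 h, Sym2.eq_swap]⟩
      | inr i, inr j => exact absurd h gn_not_adj_inr_inr
    · rintro (⟨i, j, hij, he⟩ | ⟨i, he⟩)
      · rw [Sym2.eq_iff] at he
        rcases he with ⟨rfl, rfl⟩ | ⟨rfl, rfl⟩
        · exact gn_adj_inl_inl.2 hij
        · exact gn_adj_inl_inl.2 hij.symm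
      · rw [Sym2.eq_iff] at he
        rcases he with ⟨rfl, rfl⟩ | ⟨rfl, rfl⟩
        · exact gn_adj_inl_inr.2 rfl
        · exact gn_adj_inr_inl.2 rfl

lemma mem_Pstar {P : Finset (Fin m ⊕ Fin m)} :
    P ∈ Pstar m ↔ P = Vbig m ∨ ∃ j, P = {inr j} := by
  simp [Pstar, Vbig, eq_comm]

variable {C : Finpartition (Finset.univ : Finset (Fin m ⊕ Fin m))}

/-- Structure of cliques: a part is either all `inl`s, or `{inr i}`, or `{inl i, inr i}`. -/
lemma part_structure (hC : IsCliquePartition (Gn m) C) {P : Finset (Fin m ⊕ Fin m)}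
    (hP : P ∈ C.parts) :
    (∀ x ∈ P, ∃ i, x = inl i) ∨ ∃ i : Fin m, P = {inr i} ∨ P = {inl i, inr i} := by
  by_cases h : ∀ x ∈ P, ∃ i, x = inl i
  · exact Or.inl h
  · push_neg at h
    obtain ⟨x, hxP, hx⟩ := h
    have hi : ∃ i, x = inr i := by
      cases x with
      | inl i => exact absurd rfl (hx i)
      | inr i => exact ⟨i, rfl⟩
    obtain ⟨i₀, rfl⟩ := hi
    have hsub : P ⊆ {inl i₀, inr i₀} := by
      intro y hyP
      rcases eq_or_ne y (inr i₀) with rfl | hy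
      · simp
      · have hadj := hC P hP hyP hxP hy
        match y with
        | inl j =>
          have : j = i₀ := gn_adj_inl_inr.1 hadj
          simp [this]
        | inr j => exact absurd hadj gn_not_adj_inr_inr
    refine Or.inr ⟨i₀, ?_⟩
    by_cases hl : inl i₀ ∈ P
    · right
      apply Finset.Subset.antisymm hsub
      intro y hy
      rcases Finset.mem_insert.1 hy with rfl | hy
      · exact hl
      · rw [Finset.mem_singleton] at hy; exact hy ▸ hxP
    · left
      apply Finset.Subset.antisymm
      · intro y hy
        rcases Finset.mem_insert.1 (hsub hy) with rfl | h
        · exact absurd hy hl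
        · exact h
      · intro y hy
        rw [Finset.mem_singleton] at hy; exact hy ▸ hxP

lemma pendant_not_crosses_iff (hC : IsCliquePartition (Gn m) C) (i : Fin m) :
    ¬ Crosses C s(inl i, inr i) ↔ ({inl i, inr i} : Finset (Fin m ⊕ Fin m)) ∈ C.parts := by
  constructor
  · intro h
    rw [Crosses, not_not] at h
    obtain ⟨P, hP, hmem⟩ := h
    have h1 : inl i ∈ P := hmem _ (by simp)
    have h2 : inr i ∈ P := hmem _ (by simp)
    rcases part_structure hC hP with hall | ⟨j, rfl | rfl⟩
    · obtain ⟨k, hk⟩ := hall _ h2; exact absurd hk (by simp)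
    · exact absurd (Finset.mem_singleton.1 h1) (by simp)
    · have : (inr i : Fin m ⊕ Fin m) = inr j := by
        rcases Finset.mem_insert.1 h2 with h | h
        · exact absurd h (by simp)
        · exact Finset.mem_singleton.1 h
      obtain rfl : i = j := by simpa using this
      exact hP
  · intro h hc
    exact hc ⟨_, h, by intro x hx; rcases Sym2.mem_iff.1 hx with rfl | rfl <;> simp⟩

lemma clique_edge_crosses_of_paired {i j : Fin m}
    (hpi : ({inl i, inr i} : Finset (Fin m ⊕ Fin m)) ∈ C.parts) (hij : j ≠ i) : Crosses C s(inl i, inl j) := by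
  rintro ⟨P, hP, hmem⟩
  have h1 : inl i ∈ P := hmem _ (by simp)
  have h2 : inl j ∈ P := hmem _ (by simp)
  have : P = {inl i, inr i} := C.eq_of_mem_parts hP hpi h1 (by simp)
  rw [this] at h2
  rcases Finset.mem_insert.1 h2 with h | h
  · exact hij (by simpa using h)
  · simp at h

/-! ### Counting crossing edges -/

def pairedSet (C : Finpartition (Finset.univ : Finset (Fin m ⊕ Fin m))) : Set (Fin m) :=
  {i | ({inl i, inr i} : Finset (Fin m ⊕ Fin m)) ∈ C.parts}

def PenCr (C : Finpartition (Finset.univ : Finset (Fin m ⊕ Fin m))) :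
    Set (Sym2 (Fin m ⊕ Fin m)) :=
  {e | (∃ i, e = s(inl i, inr i)) ∧ Crosses C e}

def ClCr (C : Finpartition (Finset.univ : Finset (Fin m ⊕ Fin m))) :
    Set (Sym2 (Fin m ⊕ Fin m)) :=
  {e | (∃ i j, i ≠ j ∧ e = s(inl i, inl j)) ∧ Crosses C e}

lemma cost_eq_split : cost (Gn m) C = (PenCr C).ncard + (ClCr C).ncard := by
  have hset : {e | e ∈ (Gn m).edgeSet ∧ Crosses C e} = PenCr C ∪ ClCr C := by
    ext e
    simp only [Set.mem_setOf_eq, Set.mem_union, PenCr, ClCr]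
    constructor
    · rintro ⟨h, hcr⟩
      rcases gn_edge_iff.1 h with h | h
      · exact Or.inr ⟨h, hcr⟩
      · exact Or.inl ⟨h, hcr⟩
    · rintro (⟨h, hcr⟩ | ⟨h, hcr⟩)
      · exact ⟨gn_edge_iff.2 (Or.inr h), hcr⟩
      · exact ⟨gn_edge_iff.2 (Or.inl h), hcr⟩
  rw [cost, hset, Set.ncard_union_eq ?_ (Set.toFinite _) (Set.toFinite _)]
  rw [Set.disjoint_left]
  rintro e ⟨⟨i, rfl⟩, -⟩ ⟨⟨a, b, hab, he⟩, -⟩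
  rw [Sym2.eq_iff] at he
  rcases he with ⟨-, h⟩ | ⟨-, h⟩ <;> simp at h

lemma pen_inj : Function.Injective (fun i : Fin m => s((inl i : Fin m ⊕ Fin m), inr i)) := by
  intro i j h
  simp only [Sym2.eq_iff] at h
  rcases h with ⟨h, -⟩ | ⟨h, -⟩
  · simpa using h
  · simp at h

lemma inl_pair_inj (i0 : Fin m) :
    Function.Injective (fun j : Fin m => s((inl i0 : Fin m ⊕ Fin m), inl j)) := by
  intro x y h
  simp only [Sym2.eq_iff] at h
  rcases h with ⟨-, h⟩ | ⟨h1, h2⟩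
  · simpa using h
  · have : x = i0 := by simpa using h2
    have : i0 = y := by simpa using h1
    omega

lemma penCr_eq (hC : IsCliquePartition (Gn m) C) :
    PenCr C = (fun i : Fin m => s((inl i : Fin m ⊕ Fin m), inr i)) '' (pairedSet C)ᶜ := by
  ext e
  simp only [PenCr, Set.mem_setOf_eq, Set.mem_image, Set.mem_compl_iff, pairedSet]
  constructor
  · rintro ⟨⟨i, rfl⟩, hcr⟩
    exact ⟨i, fun hp => ((pendant_not_crosses_iff hC i).2 hp) hcr, rfl⟩
  · rintro ⟨i, hnp, rfl⟩
    refine ⟨⟨i, rfl⟩, ?_⟩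
    by_contra h
    exact hnp ((pendant_not_crosses_iff hC i).1 h)

lemma penCr_ncard (hC : IsCliquePartition (Gn m) C) :
    (PenCr C).ncard + (pairedSet C).ncard = m := by
  rw [penCr_eq hC, Set.ncard_image_of_injective _ pen_inj]
  have h := Set.ncard_add_ncard_compl (pairedSet C)
  simp only [Nat.card_eq_fintype_card, Fintype.card_fin] at h
  omega

def star1 (i0 : Fin m) : Set (Sym2 (Fin m ⊕ Fin m)) :=
  (fun j : Fin m => s((inl i0 : Fin m ⊕ Fin m), inl j)) '' {j | j ≠ i0}

def star2 (i1 i0 : Fin m) : Set (Sym2 (Fin m ⊕ Fin m)) :=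
  (fun j : Fin m => s((inl i1 : Fin m ⊕ Fin m), inl j)) '' {j | j ≠ i1 ∧ j ≠ i0}

lemma star1_ncard (i0 : Fin m) : (star1 i0).ncard + 1 = m := by
  rw [star1, Set.ncard_image_of_injective _ (inl_pair_inj i0)]
  have h : ({j | j ≠ i0} : Set (Fin m)) = ({i0} : Set (Fin m))ᶜ := by ext; simp
  have h2 := Set.ncard_add_ncard_compl ({i0} : Set (Fin m))
  simp only [Nat.card_eq_fintype_card, Fintype.card_fin, Set.ncard_singleton] at h2
  rw [h]
  omega

lemma star2_ncard {i1 i0 : Fin m} (h01 : i1 ≠ i0) : (star2 i1 i0).ncard + 2 = m := by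
  rw [star2, Set.ncard_image_of_injective _ (inl_pair_inj i1)]
  have h : ({j | j ≠ i1 ∧ j ≠ i0} : Set (Fin m)) = ({i1, i0} : Set (Fin m))ᶜ := by ext x; simp [not_or]
  have h2 := Set.ncard_add_ncard_compl ({i1, i0} : Set (Fin m))
  rw [Set.ncard_pair h01] at h2
  simp only [Nat.card_eq_fintype_card, Fintype.card_fin] at h2
  rw [h]
  omega

lemma star1_subset {i0 : Fin m} (hpi : i0 ∈ pairedSet C) : star1 i0 ⊆ ClCr C := by
  rintro e ⟨j, hj, rfl⟩
  exact ⟨⟨i0, j, Ne.symm hj, rfl⟩, clique_edge_crosses_of_paired hpi hj⟩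

lemma star2_subset {i1 i0 : Fin m} (hpi : i1 ∈ pairedSet C) : star2 i1 i0 ⊆ ClCr C := by
  rintro e ⟨j, hj, rfl⟩
  exact ⟨⟨i1, j, Ne.symm hj.1, rfl⟩, clique_edge_crosses_of_paired hpi hj.1⟩

lemma star_disjoint {i1 i0 : Fin m} (h01 : i1 ≠ i0) : Disjoint (star1 i0) (star2 i1 i0) := by
  rw [Set.disjoint_left]
  rintro e ⟨j, hj, rfl⟩ ⟨k, hk, he⟩
  rw [Sym2.eq_iff] at he
  rcases he with ⟨h1, -⟩ | ⟨-, h2⟩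
  · exact h01 (by simpa using h1)
  · exact hk.2 (by simpa using h2)

/-! ### The canonical partition -/

lemma parts_eq_pstar_of_no_cross (hm : 2 ≤ m) (hC : IsCliquePartition (Gn m) C)
    (h : ∀ i j : Fin m, i ≠ j → ¬ Crosses C s(inl i, inl j)) : C.parts = Pstar m := by
  have hm0 : 0 < m := by omega
  set i₀ : Fin m := ⟨0, hm0⟩ with hi₀
  set P₀ := C.part (inl i₀) with hP₀def
  have hP₀ : P₀ ∈ C.parts := C.part_mem.2 (Finset.mem_univ _)
  have hmemP₀ : (inl i₀ : Fin m ⊕ Fin m) ∈ P₀ := C.mem_part (Finset.mem_univ _)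
  have hall : ∀ j : Fin m, (inl j : Fin m ⊕ Fin m) ∈ P₀ := by
    intro j
    rcases eq_or_ne j i₀ with rfl | hj
    · exact hmemP₀
    · have h2 := h i₀ j (Ne.symm hj)
      rw [Crosses, not_not] at h2
      obtain ⟨Q, hQ, hQm⟩ := h2
      have h1 : (inl i₀ : Fin m ⊕ Fin m) ∈ Q := hQm _ (by simp)
      have h2' : (inl j : Fin m ⊕ Fin m) ∈ Q := hQm _ (by simp)
      rwa [C.eq_of_mem_parts hQ hP₀ h1 hmemP₀] at h2'
  have hnor : ∀ k : Fin m, (inr k : Fin m ⊕ Fin m) ∉ P₀ := by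
    intro k hk
    have hj : ∃ j : Fin m, j ≠ k := by
      rcases eq_or_ne i₀ k with rfl | h'
      · exact ⟨⟨1, by omega⟩, by rw [hi₀]; intro hh; simpa using congrArg Fin.val hh⟩
      · exact ⟨i₀, h'⟩
    obtain ⟨j, hjk⟩ := hj
    have hadj := hC P₀ hP₀ (by simpa using hall j) (by simpa using hk) (by simp)
    exact hjk (gn_adj_inl_inr.1 hadj)
  have hP₀eq : P₀ = Vbig m := by
    apply Finset.Subset.antisymm
    · intro x hx
      match x with
      | inl i => exact mem_Vbig.2 ⟨i, rfl⟩
      | inr k => exact absurd hx (hnor k)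
    · intro x hx
      obtain ⟨i, rfl⟩ := mem_Vbig.1 hx
      exact hall i
  have hsing : ∀ k : Fin m, ({inr k} : Finset (Fin m ⊕ Fin m)) ∈ C.parts := by
    intro k
    have hQ : C.part (inr k) ∈ C.parts := C.part_mem.2 (Finset.mem_univ _)
    have hkQ : (inr k : Fin m ⊕ Fin m) ∈ C.part (inr k) := C.mem_part (Finset.mem_univ _)
    rcases part_structure hC hQ with hallQ | ⟨j, hj | hj⟩
    · obtain ⟨i, hi⟩ := hallQ _ hkQ
      simp at hi
    · have hkj : (inr k : Fin m ⊕ Fin m) = inr j := by rw [hj] at hkQ; simpa using hkQ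
      obtain rfl : k = j := by simpa using hkj
      exact hj ▸ hQ
    · exfalso
      have hkj : k = j := by
        rw [hj] at hkQ
        rcases Finset.mem_insert.1 hkQ with h' | h'
        · simp at h'
        · simpa using Finset.mem_singleton.1 h'
      subst hkj
      have hlk : (inl k : Fin m ⊕ Fin m) ∈ C.part (inr k) := by rw [hj]; simp
      have := C.eq_of_mem_parts hQ hP₀ hlk (hall k)
      exact hnor k (this ▸ hkQ)
  ext P
  rw [mem_Pstar]
  constructor
  · intro hP
    obtain ⟨x, hx⟩ := C.nonempty_of_mem_parts hP
    match x with
    | inl i =>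
      exact Or.inl (hP₀eq ▸ C.eq_of_mem_parts hP hP₀ hx (hall i))
    | inr k =>
      exact Or.inr ⟨k, C.eq_of_mem_parts hP (hsing k) hx (by simp)⟩
  · rintro (rfl | ⟨j, rfl⟩)
    · exact hP₀eq ▸ hP₀
    · exact hsing j

lemma exists_cstar (hm : 0 < m) :
    ∃ C : Finpartition (Finset.univ : Finset (Fin m ⊕ Fin m)), C.parts = Pstar m := by
  refine ⟨⟨Pstar m, ?_, ?_, ?_⟩, rfl⟩
  · rw [Finset.supIndep_iff_pairwiseDisjoint]
    intro a ha b hb hab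
    rw [Finset.mem_coe, mem_Pstar] at ha hb
    simp only [Function.onFun, id]
    rw [Finset.disjoint_left]
    intro x hx hx'
    rcases ha with rfl | ⟨j, rfl⟩ <;> rcases hb with rfl | ⟨k, rfl⟩
    · exact hab rfl
    · obtain ⟨i, rfl⟩ := mem_Vbig.1 hx
      simp at hx'
    · obtain ⟨i, rfl⟩ := mem_Vbig.1 hx'
      simp at hx
    · rw [Finset.mem_singleton] at hx hx'
      exact hab (by rw [← hx, hx'])
  · apply Finset.Subset.antisymm
    · intro x _
      exact Finset.mem_univ x
    · intro x _
      rw [Finset.mem_sup]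
      match x with
      | inl i => exact ⟨Vbig m, mem_Pstar.2 (Or.inl rfl), mem_Vbig.2 ⟨i, rfl⟩⟩
      | inr k => exact ⟨{inr k}, mem_Pstar.2 (Or.inr ⟨k, rfl⟩), by simp⟩
  · intro h
    rw [Finset.bot_eq_empty, mem_Pstar] at h
    rcases h with h | ⟨j, h⟩
    · have : (inl (⟨0, hm⟩ : Fin m) : Fin m ⊕ Fin m) ∈ Vbig m := mem_Vbig.2 ⟨_, rfl⟩
      rw [← h] at this
      simp at this
    · exact (Finset.singleton_ne_empty _) h.symm

lemma isCliquePartition_pstar (hparts : C.parts = Pstar m) : IsCliquePartition (Gn m) C := by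
  intro P hP
  rw [hparts, mem_Pstar] at hP
  rcases hP with rfl | ⟨j, rfl⟩
  · intro x hx y hy hxy
    obtain ⟨i, rfl⟩ := mem_Vbig.1 (Finset.mem_coe.1 hx)
    obtain ⟨i', rfl⟩ := mem_Vbig.1 (Finset.mem_coe.1 hy)
    exact gn_adj_inl_inl.2 (by rintro rfl; exact hxy rfl)
  · rw [Finset.coe_singleton]
    intro x hx y hy hxy
    rw [Set.mem_singleton_iff] at hx hy
    exact absurd (hx.trans hy.symm) hxy

lemma crosses_pstar_pendant (hparts : C.parts = Pstar m) (i : Fin m) :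
    Crosses C s(inl i, inr i) := by
  rintro ⟨P, hP, hmem⟩
  rw [hparts, mem_Pstar] at hP
  have h1 : (inl i : Fin m ⊕ Fin m) ∈ P := hmem _ (by simp)
  have h2 : (inr i : Fin m ⊕ Fin m) ∈ P := hmem _ (by simp)
  rcases hP with rfl | ⟨j, rfl⟩
  · obtain ⟨i', hi'⟩ := mem_Vbig.1 h2
    simp at hi'
  · simp at h1

lemma not_crosses_pstar_clique (hparts : C.parts = Pstar m) (i j : Fin m) :
    ¬ Crosses C s(inl i, inl j) := by
  rw [Crosses, not_not]
  refine ⟨Vbig m, by rw [hparts]; exact mem_Pstar.2 (Or.inl rfl), ?_⟩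
  intro x hx
  rcases Sym2.mem_iff.1 hx with rfl | rfl <;> exact mem_Vbig.2 ⟨_, rfl⟩

lemma cost_pstar (hparts : C.parts = Pstar m) : cost (Gn m) C = m := by
  have hset : {e | e ∈ (Gn m).edgeSet ∧ Crosses C e}
      = (fun i : Fin m => s((inl i : Fin m ⊕ Fin m), inr i)) '' Set.univ := by
    ext e
    simp only [Set.mem_setOf_eq, Set.image_univ, Set.mem_range]
    constructor
    · rintro ⟨h, hcr⟩
      rcases gn_edge_iff.1 h with ⟨i, j, hij, rfl⟩ | ⟨i, rfl⟩
      · exact absurd hcr (not_crosses_pstar_clique hparts i j)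
      · exact ⟨i, rfl⟩
    · rintro ⟨i, rfl⟩
      exact ⟨gn_edge_iff.2 (Or.inr ⟨i, rfl⟩), crosses_pstar_pendant hparts i⟩
  rw [cost, hset, Set.ncard_image_of_injective _ pen_inj]
  simp [Set.ncard_univ]

theorem statement_9 (n : ℕ) (hn : Even n) (h8 : 8 ≤ n) :
    (∃ C : Finpartition (Finset.univ : Finset (Fin (n / 2) ⊕ Fin (n / 2))),
      C.parts = Pstar (n / 2) ∧ IsCliquePartition (Gn (n / 2)) C ∧
      cost (Gn (n / 2)) C = n / 2) ∧
    ∀ C : Finpartition (Finset.univ : Finset (Fin (n / 2) ⊕ Fin (n / 2))),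
      IsCliquePartition (Gn (n / 2)) C → C.parts ≠ Pstar (n / 2) →
      n / 2 < cost (Gn (n / 2)) C := by
  set m := n / 2 with hm
  have hm4 : 4 ≤ m := by omega
  constructor
  · obtain ⟨C, hC⟩ := exists_cstar (m := m) (by omega)
    exact ⟨C, hC, isCliquePartition_pstar hC, cost_pstar hC⟩
  · intro C hC hne
    rw [cost_eq_split]
    set p := (pairedSet C).ncard with hp
    have hpen : (PenCr C).ncard + p = m := penCr_ncard hC
    rcases Nat.eq_zero_or_pos p with hp0 | hp1
    · -- no paired vertices
      by_cases hcl : (ClCr C).Nonempty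
      · have hX : 0 < (ClCr C).ncard := (Set.ncard_pos (Set.toFinite _)).2 hcl
        omega
      · exfalso
        apply hne
        apply parts_eq_pstar_of_no_cross (by omega) hC
        intro i j hij hcr
        exact hcl ⟨s(inl i, inl j), ⟨i, j, hij, rfl⟩, hcr⟩
    · -- some paired vertex
      have hple : p ≤ m := by omega
      obtain ⟨i0, hi0⟩ : (pairedSet C).Nonempty := by
        rw [← Set.ncard_pos (Set.toFinite _)]
        omega
      by_cases hcase : p + 2 ≤ m
      · have hsub := star1_subset (C := C) hi0
        have hX : (star1 i0).ncard ≤ (ClCr C).ncard :=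
          Set.ncard_le_ncard hsub (Set.toFinite _)
        have hs1 := star1_ncard i0
        omega
      · -- p ≥ m - 1 ≥ 3, so there are two distinct paired vertices
        obtain ⟨i1, hi1, h01⟩ : ∃ i1 ∈ pairedSet C, i1 ≠ i0 := by
          have h2 : 1 < (pairedSet C).ncard := by omega
          obtain ⟨b, hb, hbne⟩ := Set.exists_ne_of_one_lt_ncard h2 i0
          exact ⟨b, hb, hbne⟩
        have hsub : star1 i0 ∪ star2 i1 i0 ⊆ ClCr C :=
          Set.union_subset (star1_subset hi0) (star2_subset hi1)
        have hX : (star1 i0 ∪ star2 i1 i0).ncard ≤ (ClCr C).ncard :=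
          Set.ncard_le_ncard hsub (Set.toFinite _)
        rw [Set.ncard_union_eq (star_disjoint h01) (Set.toFinite _) (Set.toFinite _)] at hX
        have hs1 := star1_ncard i0
        have hs2 := star2_ncard h01
        omega

end CD
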